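/- arXiv:2205.02723 — 2 statements merged into one kernel-verified Lean document; each statement's English description precedes it below -/
import Mathlib

section
/- Let α ∈ (0,2) and let {ξ^k}, {w̃^k}, {ξ̃^k} for k = 0,1,…,N be generated by the parallel splitting ALM step followed by the rank-two relaxation step ξ^{k+1} = ξ^k − αℳ(ξ^k − ξ̃^k). Define the ergodic average w̄_N = (1/(N+1)) Σ_{k=0}^N w̃^k with first components x̄_N. Then w̄_N ∈ Ω and, for every w = (x_1,…,x_p,λ) ∈ Ω with ξ = Pw: θ(x̄_N) − θ(x) + (w̄_N − w)ᵀF(w) ≤ (1/(2α(N+1)))‖ξ − ξ^0‖²_ℋ. -/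
open Matrix
open scoped Kronecker

noncomputable section

/-- `Q₀ = [β I_p, e_p; −e_pᵀ, 1/β]`. -/
def Q0 (p : ℕ) (β : ℝ) : Matrix (Fin p ⊕ Unit) (Fin p ⊕ Unit) ℝ :=
  Matrix.fromBlocks (β • (1 : Matrix (Fin p) (Fin p) ℝ))
    (Matrix.of fun _ _ => (1 : ℝ))
    (Matrix.of fun _ _ => (-1 : ℝ))
    (Matrix.of fun _ _ => 1 / β)

/-- `D₀ = diag(β, …, β, 1/β)`. -/
def D0 (p : ℕ) (β : ℝ) : Matrix (Fin p ⊕ Unit) (Fin p ⊕ Unit) ℝ :=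
  Matrix.fromBlocks (β • (1 : Matrix (Fin p) (Fin p) ℝ)) 0 0
    (Matrix.of fun _ _ => 1 / β)

/-- `M₀ = I_{p+1} − (1/(p+1))·[e_p e_pᵀ, −(1/β)e_p; β e_pᵀ, p]`. -/
def M0 (p : ℕ) (β : ℝ) : Matrix (Fin p ⊕ Unit) (Fin p ⊕ Unit) ℝ :=
  1 - (1 / (p + 1 : ℝ)) •
    Matrix.fromBlocks (Matrix.of fun _ _ => (1 : ℝ))
      (Matrix.of fun _ _ => -(1 / β))
      (Matrix.of fun _ _ => (β : ℝ))
      (Matrix.of fun _ _ => (p : ℝ))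

/-- `H₀ = [β(I_p + e_p e_pᵀ), 0; 0, (p+1)/β]`. -/
def H0 (p : ℕ) (β : ℝ) : Matrix (Fin p ⊕ Unit) (Fin p ⊕ Unit) ℝ :=
  Matrix.fromBlocks (β • ((1 : Matrix (Fin p) (Fin p) ℝ) + Matrix.of fun _ _ => (1 : ℝ))) 0 0
    (Matrix.of fun _ _ => (p + 1 : ℝ) / β)

/-- `𝒬 = Q₀ ⊗ I_m`. -/
def calQ (p m : ℕ) (β : ℝ) : Matrix ((Fin p ⊕ Unit) × Fin m) ((Fin p ⊕ Unit) × Fin m) ℝ :=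
  Q0 p β ⊗ₖ (1 : Matrix (Fin m) (Fin m) ℝ)

/-- `𝒟 = D₀ ⊗ I_m`. -/
def calD (p m : ℕ) (β : ℝ) : Matrix ((Fin p ⊕ Unit) × Fin m) ((Fin p ⊕ Unit) × Fin m) ℝ :=
  D0 p β ⊗ₖ (1 : Matrix (Fin m) (Fin m) ℝ)

/-- `ℳ = M₀ ⊗ I_m`. -/
def calM (p m : ℕ) (β : ℝ) : Matrix ((Fin p ⊕ Unit) × Fin m) ((Fin p ⊕ Unit) × Fin m) ℝ :=
  M0 p β ⊗ₖ (1 : Matrix (Fin m) (Fin m) ℝ)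

/-- `ℋ = H₀ ⊗ I_m`. -/
def calH (p m : ℕ) (β : ℝ) : Matrix ((Fin p ⊕ Unit) × Fin m) ((Fin p ⊕ Unit) × Fin m) ℝ :=
  H0 p β ⊗ₖ (1 : Matrix (Fin m) (Fin m) ℝ)

/-- `‖v‖²_G = vᵀ G v`. -/
def nsq {p m : ℕ} (G : Matrix ((Fin p ⊕ Unit) × Fin m) ((Fin p ⊕ Unit) × Fin m) ℝ)
    (v : (Fin p ⊕ Unit) × Fin m → ℝ) : ℝ :=
  v ⬝ᵥ G.mulVec v

/-- `θ(x) = Σ_i θ_i(x_i)`. -/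
def thetaSum {p : ℕ} {n : Fin p → ℕ} (θ : (i : Fin p) → (Fin (n i) → ℝ) → ℝ)
    (x : (i : Fin p) → Fin (n i) → ℝ) : ℝ :=
  ∑ i, θ i (x i)

/-- The Euclidean inner product on `ℝ^{n_1}×⋯×ℝ^{n_p}×ℝ^m`. -/
def dotW {p m : ℕ} {n : Fin p → ℕ}
    (w w' : ((i : Fin p) → Fin (n i) → ℝ) × (Fin m → ℝ)) : ℝ :=
  (∑ i, w.1 i ⬝ᵥ w'.1 i) + w.2 ⬝ᵥ w'.2

/-- `F(w) = (−A_1ᵀλ, …, −A_pᵀλ, Σ_i A_i x_i − b)`. -/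
def Fop {p m : ℕ} {n : Fin p → ℕ} (A : (i : Fin p) → Matrix (Fin m) (Fin (n i)) ℝ)
    (b : Fin m → ℝ) (w : ((i : Fin p) → Fin (n i) → ℝ) × (Fin m → ℝ)) :
    ((i : Fin p) → Fin (n i) → ℝ) × (Fin m → ℝ) :=
  (fun i => -((A i)ᵀ.mulVec w.2), (∑ i, (A i).mulVec (w.1 i)) - b)

/-- `Pw = (A_1 x_1, …, A_p x_p, λ) ∈ ℝ^{(p+1)m}`. -/
def Pmap {p m : ℕ} {n : Fin p → ℕ} (A : (i : Fin p) → Matrix (Fin m) (Fin (n i)) ℝ)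
    (w : ((i : Fin p) → Fin (n i) → ℝ) × (Fin m → ℝ)) :
    (Fin p ⊕ Unit) × Fin m → ℝ :=
  fun q => Sum.elim (fun i => (A i).mulVec (w.1 i) q.2) (fun _ => w.2 q.2) q.1

/-- `Ω = 𝒳_1 × ⋯ × 𝒳_p × ℝ^m`. -/
def OmegaSet {p : ℕ} (m : ℕ) {n : Fin p → ℕ} (X : (i : Fin p) → Set (Fin (n i) → ℝ)) :
    Set (((i : Fin p) → Fin (n i) → ℝ) × (Fin m → ℝ)) :=
  {w | ∀ i, w.1 i ∈ X i}

/-- The solution set `Ω*` of the variational inequality VI(Ω,F,θ). -/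
def VIsol {p m : ℕ} {n : Fin p → ℕ} (θ : (i : Fin p) → (Fin (n i) → ℝ) → ℝ)
    (X : (i : Fin p) → Set (Fin (n i) → ℝ))
    (A : (i : Fin p) → Matrix (Fin m) (Fin (n i)) ℝ) (b : Fin m → ℝ) :
    Set (((i : Fin p) → Fin (n i) → ℝ) × (Fin m → ℝ)) :=
  {ws | ws ∈ OmegaSet m X ∧ ∀ w ∈ OmegaSet m X,
    thetaSum θ w.1 - thetaSum θ ws.1 + dotW (w - ws) (Fop A b ws) ≥ 0}

/-- The `λ`-component of `ξ = (u_1, …, u_p, λ)`. -/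
def lamOf {p m : ℕ} (ξ : (Fin p ⊕ Unit) × Fin m → ℝ) : Fin m → ℝ :=
  fun j => ξ (Sum.inr (), j)

/-- The `u_i`-component of `ξ = (u_1, …, u_p, λ)`. -/
def uOf {p m : ℕ} (ξ : (Fin p ⊕ Unit) × Fin m → ℝ) (i : Fin p) : Fin m → ℝ :=
  fun j => ξ (Sum.inl i, j)

/-- The parallel splitting ALM step: with input `ξ = (u_1, …, u_p, λ)` it produces
`w̃ = (x̃_1, …, x̃_p, λ̃)` where each `x̃_i ∈ 𝒳_i` minimizes
`x_i ↦ θ_i(x_i) − λᵀ A_i x_i + (β/2)‖A_i x_i − u_i‖²` over `𝒳_i`, and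
`λ̃ = λ − β(Σ_i u_i − b)`. -/
def ALMStep {p m : ℕ} {n : Fin p → ℕ} (β : ℝ) (θ : (i : Fin p) → (Fin (n i) → ℝ) → ℝ)
    (X : (i : Fin p) → Set (Fin (n i) → ℝ))
    (A : (i : Fin p) → Matrix (Fin m) (Fin (n i)) ℝ) (b : Fin m → ℝ)
    (ξ : (Fin p ⊕ Unit) × Fin m → ℝ)
    (wt : ((i : Fin p) → Fin (n i) → ℝ) × (Fin m → ℝ)) : Prop :=
  (∀ i, wt.1 i ∈ X i ∧ ∀ y ∈ X i,
      θ i (wt.1 i) - lamOf ξ ⬝ᵥ (A i).mulVec (wt.1 i) +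
          β / 2 * (((A i).mulVec (wt.1 i) - uOf ξ i) ⬝ᵥ ((A i).mulVec (wt.1 i) - uOf ξ i)) ≤
        θ i y - lamOf ξ ⬝ᵥ (A i).mulVec y +
          β / 2 * (((A i).mulVec y - uOf ξ i) ⬝ᵥ ((A i).mulVec y - uOf ξ i))) ∧
  wt.2 = lamOf ξ - β • ((∑ i, uOf ξ i) - b)

section Aux
variable {p m : ℕ} {β : ℝ}

lemma dot_self_nonneg (v : Fin m → ℝ) : 0 ≤ v ⬝ᵥ v :=
  Finset.sum_nonneg fun j _ => mul_self_nonneg _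

lemma sum_dot {ι : Type*} (s : Finset ι) (f : ι → Fin m → ℝ) (g : Fin m → ℝ) :
    (∑ i ∈ s, f i) ⬝ᵥ g = ∑ i ∈ s, f i ⬝ᵥ g := by
  simp only [dotProduct, Finset.sum_apply, Finset.sum_mul]
  exact Finset.sum_comm

lemma dot_sum {ι : Type*} (s : Finset ι) (f : ι → Fin m → ℝ) (g : Fin m → ℝ) :
    g ⬝ᵥ (∑ i ∈ s, f i) = ∑ i ∈ s, g ⬝ᵥ f i := by
  rw [dotProduct_comm, sum_dot]; simp [dotProduct_comm]

lemma sum_const_vec (v : Fin m → ℝ) : (∑ _i : Fin p, v) = (p : ℝ) • v := by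
  rw [Finset.sum_const, Finset.card_univ, Fintype.card_fin]
  exact (Nat.cast_smul_eq_nsmul ℝ p v).symm

-- components of Pmap
lemma uOf_Pmap {n : Fin p → ℕ} (A : (i : Fin p) → Matrix (Fin m) (Fin (n i)) ℝ)
    (w : ((i : Fin p) → Fin (n i) → ℝ) × (Fin m → ℝ)) (i : Fin p) :
    uOf (Pmap A w) i = (A i).mulVec (w.1 i) := rfl

lemma lamOf_Pmap {n : Fin p → ℕ} (A : (i : Fin p) → Matrix (Fin m) (Fin (n i)) ℝ)
    (w : ((i : Fin p) → Fin (n i) → ℝ) × (Fin m → ℝ)) :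
    lamOf (Pmap A w) = w.2 := rfl

lemma uOf_sub (a b : (Fin p ⊕ Unit) × Fin m → ℝ) (i : Fin p) :
    uOf (a - b) i = uOf a i - uOf b i := rfl

lemma lamOf_sub (a b : (Fin p ⊕ Unit) × Fin m → ℝ) :
    lamOf (a - b) = lamOf a - lamOf b := rfl

lemma uOf_smul (c : ℝ) (a : (Fin p ⊕ Unit) × Fin m → ℝ) (i : Fin p) :
    uOf (c • a) i = c • uOf a i := rfl

lemma lamOf_smul (c : ℝ) (a : (Fin p ⊕ Unit) × Fin m → ℝ) :
    lamOf (c • a) = c • lamOf a := rfl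

-- calM components
lemma uOf_calM (d : (Fin p ⊕ Unit) × Fin m → ℝ) (i : Fin p) :
    uOf ((calM p m β).mulVec d) i
      = uOf d i - ((p : ℝ) + 1)⁻¹ • ((∑ i', uOf d i') - β⁻¹ • lamOf d) := by
  funext j
  simp only [calM, M0, Matrix.mulVec, uOf, dotProduct, Fintype.sum_prod_type]
  rw [Fintype.sum_sum_type]
  simp [Matrix.kroneckerMap_apply, Matrix.one_apply, Matrix.sub_apply, Matrix.smul_apply,
    Matrix.fromBlocks_apply₁₁, Matrix.fromBlocks_apply₁₂, Matrix.one_apply, sub_mul,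
    Finset.sum_ite_eq, mul_ite, Finset.sum_sub_distrib, Finset.sum_apply,
    lamOf, ite_mul, Finset.mul_sum]
  simp [uOf, ← Finset.mul_sum]
  ring
lemma lamOf_calM (d : (Fin p ⊕ Unit) × Fin m → ℝ) :
    lamOf ((calM p m β).mulVec d)
      = lamOf d - ((p : ℝ) + 1)⁻¹ • (β • (∑ i', uOf d i') + (p : ℝ) • lamOf d) := by
  funext j
  simp only [calM, M0, Matrix.mulVec, lamOf, dotProduct, Fintype.sum_prod_type]
  rw [Fintype.sum_sum_type]
  simp [Matrix.kroneckerMap_apply, Matrix.one_apply, Matrix.sub_apply, Matrix.smul_apply,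
    Matrix.fromBlocks_apply₂₁, Matrix.fromBlocks_apply₂₂, sub_mul,
    Finset.sum_ite_eq, mul_ite, Finset.sum_sub_distrib, Finset.sum_apply,
    uOf, lamOf, ite_mul, ← Finset.mul_sum]
  ring

lemma dot_split (a b : (Fin p ⊕ Unit) × Fin m → ℝ) :
    a ⬝ᵥ b = (∑ i, uOf a i ⬝ᵥ uOf b i) + lamOf a ⬝ᵥ lamOf b := by
  simp only [dotProduct, uOf, lamOf]
  rw [Fintype.sum_prod_type, Fintype.sum_sum_type]
  simp [Finset.sum_apply]

lemma uOf_calH (v : (Fin p ⊕ Unit) × Fin m → ℝ) (i : Fin p) :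
    uOf ((calH p m β).mulVec v) i = β • uOf v i + β • (∑ i', uOf v i') := by
  funext j
  simp only [calH, H0, Matrix.mulVec, uOf, dotProduct, Fintype.sum_prod_type]
  rw [Fintype.sum_sum_type]
  simp [Matrix.kroneckerMap_apply, Matrix.one_apply, Matrix.fromBlocks_apply₁₁,
    Matrix.fromBlocks_apply₁₂, Matrix.smul_apply, Matrix.add_apply, add_mul,
    Finset.sum_ite_eq, mul_ite, Finset.sum_add_distrib, Finset.sum_apply,
    ite_mul, ← Finset.mul_sum]
  simp [uOf]

lemma lamOf_calH (v : (Fin p ⊕ Unit) × Fin m → ℝ) :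
    lamOf ((calH p m β).mulVec v) = ((p + 1 : ℝ)/β) • lamOf v := by
  funext j
  simp only [calH, H0, Matrix.mulVec, lamOf, dotProduct, Fintype.sum_prod_type]
  rw [Fintype.sum_sum_type]
  simp [Matrix.kroneckerMap_apply, Matrix.one_apply, Matrix.fromBlocks_apply₂₁,
    Matrix.fromBlocks_apply₂₂, Finset.sum_ite_eq, mul_ite, Finset.sum_apply, ite_mul]
  simp [lamOf]

/-- the explicit bilinear form of `ℋ` -/
def Hb (p m : ℕ) (β : ℝ) (a b : (Fin p ⊕ Unit) × Fin m → ℝ) : ℝ :=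
  β * ∑ i, uOf a i ⬝ᵥ uOf b i + β * ((∑ i, uOf a i) ⬝ᵥ (∑ i, uOf b i))
    + ((p + 1 : ℝ)/β) * (lamOf a ⬝ᵥ lamOf b)

lemma Hb_comm (a b : (Fin p ⊕ Unit) × Fin m → ℝ) : Hb p m β a b = Hb p m β b a := by
  simp [Hb, dotProduct_comm]

lemma Hb_nonneg (hβ : 0 < β) (a : (Fin p ⊕ Unit) × Fin m → ℝ) : 0 ≤ Hb p m β a a := by
  have h1 : (0:ℝ) ≤ ∑ i, uOf a i ⬝ᵥ uOf a i :=
    Finset.sum_nonneg fun i _ => dot_self_nonneg _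
  have h2 := dot_self_nonneg (∑ i, uOf a i : Fin m → ℝ)
  have h3 := dot_self_nonneg (lamOf a : Fin m → ℝ)
  have hp1 : (0:ℝ) < (p + 1 : ℝ)/β := by positivity
  unfold Hb
  nlinarith

lemma nsq_calH (v : (Fin p ⊕ Unit) × Fin m → ℝ) :
    nsq (calH p m β) v = Hb p m β v v := by
  rw [nsq, dot_split]
  simp only [uOf_calH, lamOf_calH]
  simp only [dotProduct_add, dotProduct_smul, smul_eq_mul]
  rw [Finset.sum_add_distrib, ← Finset.mul_sum, ← Finset.mul_sum, ← sum_dot, Hb]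
lemma Hb_sub_left (a b c : (Fin p ⊕ Unit) × Fin m → ℝ) :
    Hb p m β (a - b) c = Hb p m β a c - Hb p m β b c := by
  simp only [Hb, uOf_sub, lamOf_sub, sub_dotProduct, Finset.sum_sub_distrib]
  ring

lemma Hb_sub_right (a b c : (Fin p ⊕ Unit) × Fin m → ℝ) :
    Hb p m β a (b - c) = Hb p m β a b - Hb p m β a c := by
  simp only [Hb, uOf_sub, lamOf_sub, dotProduct_sub, Finset.sum_sub_distrib]
  ring

lemma Hb_smul_right (c : ℝ) (a b : (Fin p ⊕ Unit) × Fin m → ℝ) :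
    Hb p m β a (c • b) = c * Hb p m β a b := by
  simp only [Hb, uOf_smul, lamOf_smul, dotProduct_smul, smul_eq_mul, ← Finset.smul_sum,
    ← Finset.mul_sum]
  ring

lemma Hb_polar (x y z w : (Fin p ⊕ Unit) × Fin m → ℝ) :
    Hb p m β (x - y) (z - w)
      = (Hb p m β (x - w) (x - w) - Hb p m β (x - z) (x - z))/2
        + (Hb p m β (y - z) (y - z) - Hb p m β (y - w) (y - w))/2 := by
  simp only [Hb_sub_left, Hb_sub_right]
  linear_combination (-1/2 : ℝ) * ((Hb_comm (β := β) x w) - Hb_comm (β := β) x z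
    + Hb_comm (β := β) y z - Hb_comm (β := β) y w)

/-- the explicit bilinear form of `𝒬 = ℋℳ` -/
def Qb (p m : ℕ) (β : ℝ) (a b : (Fin p ⊕ Unit) × Fin m → ℝ) : ℝ :=
  β * ∑ i, uOf a i ⬝ᵥ uOf b i + ((∑ i, uOf a i) ⬝ᵥ lamOf b)
    - (lamOf a ⬝ᵥ ∑ i, uOf b i) + (1/β) * (lamOf a ⬝ᵥ lamOf b)

lemma uOf_calM' (d : (Fin p ⊕ Unit) × Fin m → ℝ) (i : Fin p) :
    uOf ((calM p m β).mulVec d) i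
      = uOf d i - ((p : ℝ) + 1)⁻¹ • (∑ i', uOf d i')
          + (((p : ℝ) + 1)⁻¹ * β⁻¹) • lamOf d := by
  rw [uOf_calM]
  funext j
  simp [smul_sub, mul_smul]
  ring

lemma lamOf_calM' (d : (Fin p ⊕ Unit) × Fin m → ℝ) :
    lamOf ((calM p m β).mulVec d)
      = lamOf d - (((p : ℝ) + 1)⁻¹ * β) • (∑ i', uOf d i')
          - (((p : ℝ) + 1)⁻¹ * (p : ℝ)) • lamOf d := by
  rw [lamOf_calM]
  funext j
  simp [smul_add, mul_smul]
  ring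

lemma dot_smul' (c : ℝ) (f g : Fin m → ℝ) : f ⬝ᵥ (c • g) = c * (f ⬝ᵥ g) := by
  rw [dotProduct_smul, smul_eq_mul]

lemma smul_dot' (c : ℝ) (f g : Fin m → ℝ) : (c • f) ⬝ᵥ g = c * (f ⬝ᵥ g) := by
  rw [smul_dotProduct, smul_eq_mul]

lemma sum_uOf_calM (d : (Fin p ⊕ Unit) × Fin m → ℝ) :
    ∑ i, uOf ((calM p m β).mulVec d) i
      = (((p : ℝ) + 1)⁻¹) • (∑ i', uOf d i')
          + (((p : ℝ) + 1)⁻¹ * β⁻¹ * (p : ℝ)) • lamOf d := by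
  have hP : ((p : ℝ) + 1) ≠ 0 := by positivity
  funext j
  simp only [uOf_calM', Finset.sum_apply, Pi.add_apply, Pi.sub_apply, Pi.smul_apply,
    smul_eq_mul, Finset.sum_sub_distrib, Finset.sum_add_distrib, Finset.sum_const,
    Finset.card_univ, Fintype.card_fin, nsmul_eq_mul]
  field_simp
  ring

lemma Hb_calM (hβ : β ≠ 0) (x d : (Fin p ⊕ Unit) × Fin m → ℝ) :
    Hb p m β x ((calM p m β).mulVec d) = Qb p m β x d := by
  have hP : ((p : ℝ) + 1) ≠ 0 := by positivity
  rw [Hb, sum_uOf_calM]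
  simp only [Qb, uOf_calM', lamOf_calM', dotProduct_sub, dotProduct_add,
    dot_smul', Finset.sum_sub_distrib, Finset.sum_add_distrib,
    ← Finset.mul_sum, ← sum_dot]
  field_simp
  ring
set_option maxHeartbeats 1000000 in
lemma Hb_MM (hβ : β ≠ 0) (d : (Fin p ⊕ Unit) × Fin m → ℝ) :
    Hb p m β ((calM p m β).mulVec d) ((calM p m β).mulVec d)
      = β * ∑ i, uOf d i ⬝ᵥ uOf d i + (1/β) * (lamOf d ⬝ᵥ lamOf d) := by
  have hP : ((p : ℝ) + 1) ≠ 0 := by positivity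
  rw [Hb, sum_uOf_calM]
  simp only [uOf_calM', lamOf_calM', dotProduct_sub, dotProduct_add, sub_dotProduct,
    add_dotProduct, dot_smul', smul_dot', Finset.sum_sub_distrib, Finset.sum_add_distrib,
    sum_const_vec, ← Finset.mul_sum, ← sum_dot, ← dot_sum]
  rw [dotProduct_comm (lamOf d) (∑ i, uOf d i)]
  field_simp
  ring

lemma Hb_smul_left (c : ℝ) (a b : (Fin p ⊕ Unit) × Fin m → ℝ) :
    Hb p m β (c • a) b = c * Hb p m β a b := by
  simp only [Hb, uOf_smul, lamOf_smul, smul_dotProduct, smul_eq_mul, ← Finset.smul_sum,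
    ← Finset.mul_sum]
  ring

lemma Qb_self (d : (Fin p ⊕ Unit) × Fin m → ℝ) :
    Qb p m β d d = β * ∑ i, uOf d i ⬝ᵥ uOf d i + (1/β) * (lamOf d ⬝ᵥ lamOf d) := by
  rw [Qb, dotProduct_comm (lamOf d) (∑ i, uOf d i)]
  ring

lemma contraction {α : ℝ} (hβ : 0 < β) (hα0 : 0 < α) (hα2 : α ≤ 2)
    (d : (Fin p ⊕ Unit) × Fin m → ℝ) :
    0 ≤ 2 * α * Qb p m β d d
        - α^2 * Hb p m β ((calM p m β).mulVec d) ((calM p m β).mulVec d) := by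
  rw [Qb_self, Hb_MM hβ.ne']
  have h1 : (0:ℝ) ≤ ∑ i, uOf d i ⬝ᵥ uOf d i :=
    Finset.sum_nonneg fun i _ => dot_self_nonneg _
  have h3 := dot_self_nonneg (lamOf d : Fin m → ℝ)
  have hβi : (0:ℝ) ≤ 1/β := by positivity
  nlinarith [mul_nonneg (mul_nonneg hβi h3) (sub_nonneg.2 hα2),
    mul_nonneg (mul_nonneg hβ.le h1) (sub_nonneg.2 hα2), hα0.le,
    mul_nonneg hβ.le h1, mul_nonneg hβi h3]

lemma Hb_neg (a b : (Fin p ⊕ Unit) × Fin m → ℝ) :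
    Hb p m β (-a) (-b) = Hb p m β a b := by
  have h : ∀ c : (Fin p ⊕ Unit) × Fin m → ℝ, -c = (0 : _) - c := by intro c; simp
  rw [h a, h b, Hb_sub_left, Hb_sub_right, Hb_sub_right]
  have h0u : ∀ i, uOf (0 : (Fin p ⊕ Unit) × Fin m → ℝ) i = 0 := fun i => rfl
  have h0l : lamOf (0 : (Fin p ⊕ Unit) × Fin m → ℝ) = 0 := rfl
  simp [Hb, h0u, h0l]

/-- the correction-step inequality -/
lemma correction_ineq {α : ℝ} (hβ : 0 < β) (hα0 : 0 < α) (hα2 : α ≤ 2)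
    (ξk ξt ξs x : (Fin p ⊕ Unit) × Fin m → ℝ)
    (hs : ξs = ξk - α • (calM p m β).mulVec (ξk - ξt)) :
    (Hb p m β (x - ξs) (x - ξs) - Hb p m β (x - ξk) (x - ξk)) / (2 * α)
      ≤ Qb p m β (x - ξt) (ξk - ξt) := by
  set d := ξk - ξt with hd
  set Md := (calM p m β).mulVec d with hMd
  have hks : ξk - ξs = α • Md := by rw [hs]; abel
  have hpol := Hb_polar (β := β) x ξt ξk ξs
  have hHQ : Hb p m β (x - ξt) Md = Qb p m β (x - ξt) d := Hb_calM hβ.ne' _ _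
  have hsmul : Hb p m β (x - ξt) (ξk - ξs) = α * Qb p m β (x - ξt) d := by
    rw [hks, Hb_smul_right, hHQ]
  -- second bracket nonnegative
  have htk : ξt - ξk = -d := by rw [hd]; abel
  have hts : ξt - ξs = -(d - α • Md) := by rw [hs, hd]; abel
  have h1 : Hb p m β d Md = Qb p m β d d := Hb_calM hβ.ne' _ _
  have h2' : Hb p m β Md d = Qb p m β d d := by rw [Hb_comm]; exact h1
  have hexp : Hb p m β (ξt - ξk) (ξt - ξk) - Hb p m β (ξt - ξs) (ξt - ξs)
      = 2 * α * Qb p m β d d - α^2 * Hb p m β Md Md := by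
    rw [htk, hts, Hb_neg, Hb_neg]
    simp only [Hb_sub_left, Hb_sub_right, Hb_smul_left, Hb_smul_right]
    linear_combination α * h1 + α * h2'
  have h2 : 0 ≤ Hb p m β (ξt - ξk) (ξt - ξk) - Hb p m β (ξt - ξs) (ξt - ξs) := by
    rw [hexp]; exact contraction hβ hα0 hα2 d
  have h2α : 0 < 2 * α := by linarith
  rw [div_le_iff₀ h2α]
  nlinarith [hpol, hsmul, h2]
lemma pos_limit {g c : ℝ} (hc : 0 ≤ c) (h : ∀ t : ℝ, 0 < t → t ≤ 1 → 0 ≤ t * g + t^2 * c) :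
    0 ≤ g := by
  by_contra hg
  push_neg at hg
  rcases eq_or_lt_of_le hc with h0 | hcpos
  · have := h 1 one_pos le_rfl
    nlinarith
  · set t := min 1 (-g/(2*c)) with ht
    have hgpos : 0 < -g := by linarith
    have hq : 0 < -g/(2*c) := by positivity
    have ht0 : 0 < t := lt_min one_pos hq
    have ht1 : t ≤ 1 := min_le_left _ _
    have h3 := h t ht0 ht1
    have htle : t ≤ -g/(2*c) := min_le_right _ _
    have he : (-g/(2*c))*c = -g/2 := by field_simp
    nlinarith [mul_le_mul_of_nonneg_left (mul_le_mul_of_nonneg_right htle hcpos.le) ht0.le,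
      mul_pos ht0 hgpos]

lemma vi_min {n' : ℕ} (hβ : 0 < β) {θi : (Fin n' → ℝ) → ℝ} (hθi : ConvexOn ℝ Set.univ θi)
    {Xi : Set (Fin n' → ℝ)} (hXi : Convex ℝ Xi)
    (A : Matrix (Fin m) (Fin n') ℝ) (u lamk : Fin m → ℝ)
    {xt : Fin n' → ℝ} (hxt : xt ∈ Xi)
    (hmin : ∀ y ∈ Xi,
      θi xt - lamk ⬝ᵥ A.mulVec xt + β / 2 * ((A.mulVec xt - u) ⬝ᵥ (A.mulVec xt - u)) ≤
        θi y - lamk ⬝ᵥ A.mulVec y + β / 2 * ((A.mulVec y - u) ⬝ᵥ (A.mulVec y - u)))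
    {y : Fin n' → ℝ} (hy : y ∈ Xi) :
    0 ≤ θi y - θi xt + (A.mulVec y - A.mulVec xt) ⬝ᵥ (β • (A.mulVec xt - u) - lamk) := by
  set e : Fin m → ℝ := A.mulVec y - A.mulVec xt with he
  set a : Fin m → ℝ := A.mulVec xt - u with ha
  have hc : 0 ≤ β/2 * (e ⬝ᵥ e) := by
    have := dot_self_nonneg (m := m) e
    positivity
  refine pos_limit hc ?_
  intro t ht0 ht1
  set z : Fin n' → ℝ := (1 - t) • xt + t • y with hz
  have hzX : z ∈ Xi := hXi hxt hy (by linarith) ht0.le (by ring)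
  have hAz : A.mulVec z - u = a + t • e := by
    rw [hz, Matrix.mulVec_add, Matrix.mulVec_smul, Matrix.mulVec_smul, ha, he]
    module
  have hAz' : A.mulVec z = A.mulVec xt + t • e := by
    rw [hz, Matrix.mulVec_add, Matrix.mulVec_smul, Matrix.mulVec_smul, he]
    module
  have hθz : θi z ≤ (1 - t) * θi xt + t * θi y := by
    have := hθi.2 (Set.mem_univ xt) (Set.mem_univ y) (by linarith : (0:ℝ) ≤ 1 - t) ht0.le
      (by ring : (1 - t) + t = 1)
    simpa [hz, smul_eq_mul] using this
  have hmz := hmin z hzX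
  have hdot1 : (A.mulVec z - u) ⬝ᵥ (A.mulVec z - u)
      = a ⬝ᵥ a + 2 * t * (e ⬝ᵥ a) + t^2 * (e ⬝ᵥ e) := by
    rw [hAz]
    simp only [dotProduct_add, add_dotProduct, dot_smul', smul_dot']
    rw [dotProduct_comm a e]
    ring
  have hdot2 : lamk ⬝ᵥ A.mulVec z = lamk ⬝ᵥ A.mulVec xt + t * (lamk ⬝ᵥ e) := by
    rw [hAz', dotProduct_add, dot_smul']
  have hgoal : (A.mulVec y - A.mulVec xt) ⬝ᵥ (β • (A.mulVec xt - u) - lamk)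
      = β * (e ⬝ᵥ a) - (lamk ⬝ᵥ e) := by
    rw [← he, ← ha, dotProduct_sub, dot_smul', dotProduct_comm e lamk]
  rw [hgoal]
  nlinarith [hmz, hθz, hdot1, hdot2]
section Pred
variable {p m : ℕ} {β : ℝ} {n : Fin p → ℕ}

lemma dotW_F (A : (i : Fin p) → Matrix (Fin m) (Fin (n i)) ℝ) (b : Fin m → ℝ)
    (w w' v : ((i : Fin p) → Fin (n i) → ℝ) × (Fin m → ℝ)) :
    dotW (w - w') (Fop A b v)
      = -((∑ i, ((A i).mulVec (w.1 i) - (A i).mulVec (w'.1 i))) ⬝ᵥ v.2)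
        + (w.2 - w'.2) ⬝ᵥ ((∑ i, (A i).mulVec (v.1 i)) - b) := by
  simp only [dotW, Fop, Prod.fst_sub, Prod.snd_sub, Pi.sub_apply, dotProduct_neg,
    Matrix.dotProduct_mulVec, Matrix.vecMul_transpose, Matrix.mulVec_sub, sum_dot,
    Finset.sum_neg_distrib]

lemma dotW_skew (A : (i : Fin p) → Matrix (Fin m) (Fin (n i)) ℝ) (b : Fin m → ℝ)
    (w w' : ((i : Fin p) → Fin (n i) → ℝ) × (Fin m → ℝ)) :
    dotW (w - w') (Fop A b w') = dotW (w - w') (Fop A b w) := by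
  rw [dotW_F, dotW_F]
  simp only [sub_dotProduct, dotProduct_sub, Finset.sum_sub_distrib, sub_dotProduct]
  rw [dotProduct_comm w.2 (∑ i, (A i).mulVec (w.1 i)),
    dotProduct_comm w.2 (∑ i, (A i).mulVec (w'.1 i)),
    dotProduct_comm w'.2 (∑ i, (A i).mulVec (w.1 i)),
    dotProduct_comm w'.2 (∑ i, (A i).mulVec (w'.1 i))]
  ring

lemma pred_identity (hβ : β ≠ 0) (A : (i : Fin p) → Matrix (Fin m) (Fin (n i)) ℝ)
    (b : Fin m → ℝ) (w wtk : ((i : Fin p) → Fin (n i) → ℝ) × (Fin m → ℝ))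
    (ξk : (Fin p ⊕ Unit) × Fin m → ℝ)
    (hlam : wtk.2 = lamOf ξk - β • ((∑ i, uOf ξk i) - b)) :
    dotW (w - wtk) (Fop A b wtk)
      = (∑ i, ((A i).mulVec (w.1 i) - (A i).mulVec (wtk.1 i)) ⬝ᵥ
            (β • ((A i).mulVec (wtk.1 i) - uOf ξk i) - lamOf ξk))
        + Qb p m β (Pmap A w - Pmap A wtk) (ξk - Pmap A wtk) := by
  rw [dotW_F, Qb]
  simp only [uOf_sub, lamOf_sub, uOf_Pmap, lamOf_Pmap, hlam]
  simp only [dotProduct_sub, sub_dotProduct, dotProduct_add, add_dotProduct,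
    dot_smul', smul_dot', Finset.sum_sub_distrib, ← sum_dot, ← dot_sum]
  simp only [dotProduct_comm]
  simp only [Finset.sum_sub_distrib, Finset.sum_add_distrib, ← Finset.mul_sum, ← sum_dot,
    ← dot_sum]
  field_simp
  ring
end Pred
section Pred2
variable {p m : ℕ} {β : ℝ} {n : Fin p → ℕ}

lemma prediction (hβ : 0 < β)
    (θ : (i : Fin p) → (Fin (n i) → ℝ) → ℝ) (hθ : ∀ i, ConvexOn ℝ Set.univ (θ i))
    (X : (i : Fin p) → Set (Fin (n i) → ℝ)) (hXconv : ∀ i, Convex ℝ (X i))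
    (A : (i : Fin p) → Matrix (Fin m) (Fin (n i)) ℝ) (b : Fin m → ℝ)
    (ξk : (Fin p ⊕ Unit) × Fin m → ℝ)
    (wtk : ((i : Fin p) → Fin (n i) → ℝ) × (Fin m → ℝ))
    (hstep : ALMStep β θ X A b ξk wtk)
    (w : ((i : Fin p) → Fin (n i) → ℝ) × (Fin m → ℝ)) (hw : w ∈ OmegaSet m X) :
    Qb p m β (Pmap A w - Pmap A wtk) (ξk - Pmap A wtk)
      ≤ thetaSum θ w.1 - thetaSum θ wtk.1 + dotW (w - wtk) (Fop A b wtk) := by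
  have hVI : ∀ i, 0 ≤ θ i (w.1 i) - θ i (wtk.1 i)
      + ((A i).mulVec (w.1 i) - (A i).mulVec (wtk.1 i)) ⬝ᵥ
          (β • ((A i).mulVec (wtk.1 i) - uOf ξk i) - lamOf ξk) := by
    intro i
    exact vi_min hβ (hθ i) (hXconv i) (A i) (uOf ξk i) (lamOf ξk) (hstep.1 i).1
      (hstep.1 i).2 (hw i)
  have key : (0:ℝ) ≤ ∑ i, (θ i (w.1 i) - θ i (wtk.1 i)
      + ((A i).mulVec (w.1 i) - (A i).mulVec (wtk.1 i)) ⬝ᵥ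
          (β • ((A i).mulVec (wtk.1 i) - uOf ξk i) - lamOf ξk)) :=
    Finset.sum_nonneg fun i _ => hVI i
  rw [Finset.sum_add_distrib, Finset.sum_sub_distrib] at key
  rw [pred_identity hβ.ne' A b w wtk ξk hstep.2, thetaSum, thetaSum]
  linarith

lemma dotW_sub_left (a b c : ((i : Fin p) → Fin (n i) → ℝ) × (Fin m → ℝ)) :
    dotW (a - b) c = dotW a c - dotW b c := by
  simp only [dotW, Prod.fst_sub, Prod.snd_sub, Pi.sub_apply, sub_dotProduct,
    Finset.sum_sub_distrib]
  ring

lemma dotW_smul_left (r : ℝ) (a c : ((i : Fin p) → Fin (n i) → ℝ) × (Fin m → ℝ)) :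
    dotW (r • a) c = r * dotW a c := by
  simp only [dotW, Prod.smul_fst, Prod.smul_snd, Pi.smul_apply, smul_dot',
    ← Finset.mul_sum]
  ring

lemma dotW_sum_left (s : Finset ℕ) (f : ℕ → ((i : Fin p) → Fin (n i) → ℝ) × (Fin m → ℝ))
    (c : ((i : Fin p) → Fin (n i) → ℝ) × (Fin m → ℝ)) :
    dotW (∑ k ∈ s, f k) c = ∑ k ∈ s, dotW (f k) c := by
  classical
  induction s using Finset.cons_induction with
  | empty => simp [dotW]
  | cons k s hk ih =>
      rw [Finset.sum_cons, Finset.sum_cons, ← ih]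
      have : dotW (f k + ∑ x ∈ s, f x) c = dotW (f k) c + dotW (∑ x ∈ s, f x) c := by
        simp only [dotW, Prod.fst_add, Prod.snd_add, Pi.add_apply, add_dotProduct,
          Finset.sum_add_distrib]
        ring
      exact this
end Pred2

/-- Ergodic convergence rate: for the iterates generated for `k = 0,…,N` by the parallel
splitting ALM step followed by the relaxation step `ξ^{k+1} = ξ^k − αℳ(ξ^k − ξ̃^k)`,
the ergodic average `w̄_N = (1/(N+1)) Σ_{k=0}^N w̃^k` satisfies `w̄_N ∈ Ω` and for all
`w ∈ Ω` (with `ξ = Pw`):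
`θ(x̄_N) − θ(x) + (w̄_N − w)ᵀF(w) ≤ (1/(2α(N+1)))‖ξ − ξ^0‖²_ℋ`. -/
theorem stmt15 {p m : ℕ} {n : Fin p → ℕ} (hp : 1 ≤ p)
    (θ : (i : Fin p) → (Fin (n i) → ℝ) → ℝ) (hθ : ∀ i, ConvexOn ℝ Set.univ (θ i))
    (X : (i : Fin p) → Set (Fin (n i) → ℝ))
    (hXconv : ∀ i, Convex ℝ (X i)) (hXclosed : ∀ i, IsClosed (X i))
    (hXne : ∀ i, (X i).Nonempty)
    (A : (i : Fin p) → Matrix (Fin m) (Fin (n i)) ℝ) (b : Fin m → ℝ)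
    {β : ℝ} (hβ : 0 < β) {α : ℝ} (hα : α ∈ Set.Ioo (0 : ℝ) 2) (N : ℕ)
    (ξ : ℕ → ((Fin p ⊕ Unit) × Fin m → ℝ))
    (wt : ℕ → ((i : Fin p) → Fin (n i) → ℝ) × (Fin m → ℝ))
    (hstep : ∀ k ≤ N, ALMStep β θ X A b (ξ k) (wt k))
    (hrel : ∀ k ≤ N, ξ (k + 1) = ξ k - α • (calM p m β).mulVec (ξ k - Pmap A (wt k)))
    (wbar : ((i : Fin p) → Fin (n i) → ℝ) × (Fin m → ℝ))
    (hwbar : wbar = (1 / (N + 1 : ℝ)) • ∑ k ∈ Finset.range (N + 1), wt k) :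
    wbar ∈ OmegaSet m X ∧ ∀ w ∈ OmegaSet m X,
      thetaSum θ wbar.1 - thetaSum θ w.1 + dotW (wbar - w) (Fop A b w) ≤
        1 / (2 * α * (N + 1)) * nsq (calH p m β) (Pmap A w - ξ 0) := by
  obtain ⟨hα0, hα2'⟩ := hα
  have hα2 : α ≤ 2 := hα2'.le
  have hN1 : (0:ℝ) < (N:ℝ) + 1 := by positivity
  have hwt : ∀ k, wbar.1 k = ∑ j ∈ Finset.range (N+1), (1/((N:ℝ)+1)) • (wt j).1 k := by
    intro k
    rw [hwbar]
    simp only [Prod.smul_fst, Prod.fst_sum, Finset.smul_sum, Finset.sum_apply, Pi.smul_apply]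
  have hwsum : (∑ _j ∈ Finset.range (N+1), (1/((N:ℝ)+1))) = 1 := by
    rw [Finset.sum_const, Finset.card_range, nsmul_eq_mul]
    push_cast
    field_simp
  have hmem : wbar ∈ OmegaSet m X := by
    intro i
    rw [hwt i]
    exact (hXconv i).sum_mem (fun k _ => by positivity) hwsum
      (fun k hk => ((hstep k (Finset.mem_range_succ_iff.mp hk)).1 i).1)
  refine ⟨hmem, ?_⟩
  intro w hw
  set ξw := Pmap A w with hξw
  set f : ℕ → ℝ := fun k => Hb p m β (ξw - ξ k) (ξw - ξ k) with hf
  have step : ∀ k ≤ N,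
      thetaSum θ (wt k).1 - thetaSum θ w.1 + dotW (wt k - w) (Fop A b w)
        ≤ (f k - f (k+1)) / (2*α) := by
    intro k hk
    have hpred := prediction hβ θ hθ X hXconv A b (ξ k) (wt k) (hstep k hk) w hw
    have hcorr := correction_ineq hβ hα0 hα2 (ξ k) (Pmap A (wt k)) (ξ (k+1)) ξw (hrel k hk)
    have hskew := dotW_skew A b w (wt k)
    have hswap1 : dotW (wt k - w) (Fop A b w) = dotW (wt k) (Fop A b w) - dotW w (Fop A b w) :=
      dotW_sub_left _ _ _
    have hswap2 : dotW (w - wt k) (Fop A b w) = dotW w (Fop A b w) - dotW (wt k) (Fop A b w) :=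
      dotW_sub_left _ _ _
    have h2α : 0 < 2*α := by linarith
    rw [le_div_iff₀ h2α]
    rw [div_le_iff₀ h2α] at hcorr
    nlinarith [hcorr, hskew, hswap1, hswap2,
      mul_le_mul_of_nonneg_right hpred h2α.le]
  have sumstep := Finset.sum_le_sum
    (fun k (hk : k ∈ Finset.range (N+1)) => step k (Finset.mem_range_succ_iff.mp hk))
  rw [← Finset.sum_div, Finset.sum_range_sub' f] at sumstep
  have hHf : 0 ≤ f (N+1) := Hb_nonneg hβ _
  have hf0 : 0 ≤ f 0 := Hb_nonneg hβ _
  have h2α : 0 < 2*α := by linarith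
  have hdrop : (f 0 - f (N+1)) / (2*α) ≤ f 0 / (2*α) := by
    gcongr
    linarith
  -- expand LHS of sumstep
  rw [Finset.sum_add_distrib, Finset.sum_sub_distrib, Finset.sum_const,
    Finset.card_range, nsmul_eq_mul] at sumstep
  push_cast at sumstep
  -- Jensen
  have hjensen : thetaSum θ wbar.1 ≤ ∑ k ∈ Finset.range (N+1),
      (1/((N:ℝ)+1)) * thetaSum θ (wt k).1 := by
    rw [thetaSum]
    have hper : ∀ i, θ i (wbar.1 i) ≤ ∑ k ∈ Finset.range (N+1),
        (1/((N:ℝ)+1)) * θ i ((wt k).1 i) := by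
      intro i
      rw [hwt i]
      have := (hθ i).map_sum_le (t := Finset.range (N+1)) (w := fun _ => (1/((N:ℝ)+1)))
        (p := fun k => (wt k).1 i) (fun k _ => by positivity) hwsum
        (fun k _ => Set.mem_univ _)
      simpa [smul_eq_mul] using this
    calc ∑ i, θ i (wbar.1 i) ≤ ∑ i, ∑ k ∈ Finset.range (N+1),
          (1/((N:ℝ)+1)) * θ i ((wt k).1 i) := Finset.sum_le_sum fun i _ => hper i
      _ = ∑ k ∈ Finset.range (N+1), (1/((N:ℝ)+1)) * thetaSum θ (wt k).1 := by
          rw [Finset.sum_comm]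
          refine Finset.sum_congr rfl fun k _ => ?_
          rw [thetaSum, Finset.mul_sum]
  have hdotbar : dotW wbar (Fop A b w) = (1/((N:ℝ)+1)) * ∑ k ∈ Finset.range (N+1),
      dotW (wt k) (Fop A b w) := by
    rw [hwbar, dotW_smul_left, dotW_sum_left]
  have hdotsplit : dotW (wbar - w) (Fop A b w)
      = dotW wbar (Fop A b w) - dotW w (Fop A b w) := dotW_sub_left _ _ _
  -- final computation
  have hnsq : nsq (calH p m β) (Pmap A w - ξ 0) = f 0 := nsq_calH _
  rw [hnsq]
  rw [← Finset.mul_sum] at hjensen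
  have key : (N:ℝ) + 1 > 0 := hN1
  -- combine
  have hsum2 : ∑ k ∈ Finset.range (N+1), thetaSum θ (wt k).1
      - ((N:ℝ)+1) * thetaSum θ w.1 + ∑ k ∈ Finset.range (N+1), dotW (wt k - w) (Fop A b w)
      ≤ (f 0 - f (N+1)) / (2*α) := by linarith [sumstep]
  have hsplit : ∀ k, dotW (wt k - w) (Fop A b w)
      = dotW (wt k) (Fop A b w) - dotW w (Fop A b w) := fun k => dotW_sub_left _ _ _
  have hsum3 : (∑ k ∈ Finset.range (N+1), dotW (wt k - w) (Fop A b w))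
      = (∑ k ∈ Finset.range (N+1), dotW (wt k) (Fop A b w))
        - ((N:ℝ)+1) * dotW w (Fop A b w) := by
    simp only [hsplit, Finset.sum_sub_distrib, Finset.sum_const, Finset.card_range,
      nsmul_eq_mul]
    push_cast
    ring
  rw [hsum3] at hsum2
  -- now:  Σθ~ - (N+1)θ + Σdot~ - (N+1)dotw ≤ (f0 - fN1)/(2α) ≤ f0/(2α)
  have hfinal : ((N:ℝ)+1) * (thetaSum θ wbar.1 - thetaSum θ w.1 + dotW (wbar - w) (Fop A b w))
      ≤ f 0 / (2*α) := by
    have e1 : ((N:ℝ)+1) * thetaSum θ wbar.1 ≤ ∑ k ∈ Finset.range (N+1), thetaSum θ (wt k).1 := by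
      have := mul_le_mul_of_nonneg_left hjensen hN1.le
      calc ((N:ℝ)+1) * thetaSum θ wbar.1 ≤ ((N:ℝ)+1) * ((1/((N:ℝ)+1))
            * ∑ k ∈ Finset.range (N+1), thetaSum θ (wt k).1) := this
        _ = ∑ k ∈ Finset.range (N+1), thetaSum θ (wt k).1 := by field_simp
    have e2 : ((N:ℝ)+1) * dotW (wbar - w) (Fop A b w)
        = (∑ k ∈ Finset.range (N+1), dotW (wt k) (Fop A b w))
          - ((N:ℝ)+1) * dotW w (Fop A b w) := by
      rw [hdotsplit, hdotbar]
      field_simp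
    nlinarith [hsum2, hdrop, e1, e2]
  have hrw : 1 / (2 * α * ((N:ℝ) + 1)) * f 0 = (f 0 / (2*α)) / ((N:ℝ)+1) := by
    field_simp
  rw [hrw, le_div_iff₀ hN1]
  nlinarith [hfinal]
end Aux
end
end

section
/- Let α ∈ (0,2) and let the sequence {ξ^k} be generated by iterating the parallel splitting ALM step (producing w̃^k and ξ̃^k from input ξ^k) followed by the rank-two relaxation step ξ^{k+1} = ξ^k − αℳ(ξ^k − ξ̃^k). Then for every integer k ≥ 0: ‖ξ^{k+1} − ξ^{k+2}‖²_ℋ ≤ ‖ξ^k − ξ^{k+1}‖²_ℋ; moreover ‖ξ^k − ξ^{k+1}‖²_ℋ − ‖ξ^{k+1} − ξ^{k+2}‖²_ℋ ≥ α(2−α)‖(ξ^k − ξ̃^k) − (ξ^{k+1} − ξ̃^{k+1})‖²_𝒟. -/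
open Matrix
open scoped Kronecker

noncomputable section

section Helpers

variable {p m : ℕ} {β : ℝ}

lemma Q0_ll (i l : Fin p) : Q0 p β (Sum.inl i) (Sum.inl l) = if i = l then β else 0 := by
  simp [Q0, Matrix.one_apply]
lemma Q0_lr (i : Fin p) (u : Unit) : Q0 p β (Sum.inl i) (Sum.inr u) = 1 := by simp [Q0]
lemma Q0_rl (u : Unit) (l : Fin p) : Q0 p β (Sum.inr u) (Sum.inl l) = -1 := by simp [Q0]
lemma Q0_rr (u v : Unit) : Q0 p β (Sum.inr u) (Sum.inr v) = 1/β := by simp [Q0]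

lemma D0_ll (i l : Fin p) : D0 p β (Sum.inl i) (Sum.inl l) = if i = l then β else 0 := by
  simp [D0, Matrix.one_apply]
lemma D0_lr (i : Fin p) (u : Unit) : D0 p β (Sum.inl i) (Sum.inr u) = 0 := by simp [D0]
lemma D0_rl (u : Unit) (l : Fin p) : D0 p β (Sum.inr u) (Sum.inl l) = 0 := by simp [D0]
lemma D0_rr (u v : Unit) : D0 p β (Sum.inr u) (Sum.inr v) = 1/β := by simp [D0]

lemma M0_ll (i l : Fin p) :
    M0 p β (Sum.inl i) (Sum.inl l) = (if i = l then 1 else 0) - 1/(p+1:ℝ) := by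
  simp [M0, Matrix.one_apply]
lemma M0_lr (i : Fin p) (u : Unit) :
    M0 p β (Sum.inl i) (Sum.inr u) = 1/(p+1:ℝ) * (1/β) := by
  simp [M0, Matrix.one_apply]
lemma M0_rl (u : Unit) (l : Fin p) :
    M0 p β (Sum.inr u) (Sum.inl l) = -(1/(p+1:ℝ) * β) := by
  simp [M0, Matrix.one_apply]
lemma M0_rr (u v : Unit) :
    M0 p β (Sum.inr u) (Sum.inr v) = 1 - 1/(p+1:ℝ) * p := by
  simp [M0, Matrix.one_apply]

lemma H0_ll (i l : Fin p) :
    H0 p β (Sum.inl i) (Sum.inl l) = β * ((if i = l then 1 else 0) + 1) := by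
  simp [H0, Matrix.one_apply]; split_ifs <;> ring
lemma H0_lr (i : Fin p) (u : Unit) : H0 p β (Sum.inl i) (Sum.inr u) = 0 := by simp [H0]
lemma H0_rl (u : Unit) (l : Fin p) : H0 p β (Sum.inr u) (Sum.inl l) = 0 := by simp [H0]
lemma H0_rr (u v : Unit) : H0 p β (Sum.inr u) (Sum.inr v) = (p+1:ℝ)/β := by simp [H0]

theorem HM_eq_Q (hβ : β ≠ 0) : H0 p β * M0 p β = Q0 p β := by
  have hp1 : (p + 1 : ℝ) ≠ 0 := by positivity
  ext i j
  rcases i with i | i <;> rcases j with j | j <;>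
    · simp only [Matrix.mul_apply, Fintype.sum_sum_type, Finset.univ_unique,
        Finset.sum_singleton, Q0_ll, Q0_lr, Q0_rl, Q0_rr, M0_ll, M0_lr, M0_rl, M0_rr,
        H0_ll, H0_lr, H0_rl, H0_rr]
      simp only [add_mul, mul_add, sub_mul, mul_sub, ite_mul, mul_ite, mul_zero, zero_mul,
        mul_one, one_mul, zero_add, add_zero, Finset.sum_add_distrib, Finset.sum_sub_distrib,
        Finset.sum_ite_eq, Finset.sum_ite_eq', Finset.mem_univ, if_true, Finset.sum_const,
        Finset.card_univ, Fintype.card_fin, nsmul_eq_mul]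
      first
        | (split_ifs with h1 h2 h3 h4 <;>
            first | ((field_simp; try ring1); done) | ring1 | (subst_vars; simp_all; done) | (simp_all [eq_comm]; done) | rfl)
        | ((field_simp; try ring1); done)
        | (simp_all [eq_comm]; done)
        | rfl

theorem MtQ_eq_D (hβ : β ≠ 0) : (M0 p β)ᵀ * Q0 p β = D0 p β := by
  have hp1 : (p + 1 : ℝ) ≠ 0 := by positivity
  ext i j
  rcases i with i | i <;> rcases j with j | j <;>
    · simp only [Matrix.mul_apply, Matrix.transpose_apply, Fintype.sum_sum_type,
        Finset.univ_unique, Finset.sum_singleton, Q0_ll, Q0_lr, Q0_rl, Q0_rr,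
        M0_ll, M0_lr, M0_rl, M0_rr, D0_ll, D0_lr, D0_rl, D0_rr]
      simp only [add_mul, mul_add, sub_mul, mul_sub, ite_mul, mul_ite, mul_zero, zero_mul,
        mul_one, one_mul, zero_add, add_zero, neg_mul, mul_neg, neg_neg,
        Finset.sum_add_distrib, Finset.sum_sub_distrib, Finset.sum_neg_distrib,
        Finset.sum_ite_eq, Finset.sum_ite_eq', Finset.mem_univ, if_true, Finset.sum_const,
        Finset.card_univ, Fintype.card_fin, nsmul_eq_mul]
      first
        | (split_ifs with h1 h2 h3 h4 <;>
            first | ((field_simp; try ring1); done) | ring1 | (subst_vars; simp_all; done) | (simp_all [eq_comm]; done) | rfl)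
        | ((field_simp; try ring1); done)
        | (simp_all [eq_comm]; done)
        | rfl

theorem Q_add_Qt : Q0 p β + (Q0 p β)ᵀ = (2:ℝ) • D0 p β := by
  ext i j
  rcases i with i | i <;> rcases j with j | j <;>
    · simp only [Matrix.add_apply, Matrix.transpose_apply, Matrix.smul_apply, smul_eq_mul,
        Q0_ll, Q0_lr, Q0_rl, Q0_rr, D0_ll, D0_lr, D0_rl, D0_rr]
      first
        | (split_ifs with h1 h2 h3 h4 <;>
            first | ((field_simp; try ring1); done) | ring1 | (subst_vars; simp_all; done) | (simp_all [eq_comm]; done) | rfl)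
        | ((field_simp; try ring1); done)
        | ring1
        | (simp_all [eq_comm]; done)
        | rfl

theorem Ht_eq_H : (H0 p β)ᵀ = H0 p β := by
  ext i j
  rcases i with i | i <;> rcases j with j | j <;>
      simp only [Matrix.transpose_apply, H0_ll, H0_lr, H0_rl, H0_rr] <;>
    (split_ifs <;> first | rfl | (subst_vars; simp_all; done))

lemma dot_nonneg' (x : Fin m → ℝ) : 0 ≤ x ⬝ᵥ x :=
  Finset.sum_nonneg fun _ _ => mul_self_nonneg _

lemma dotProduct_sum' {ι : Type*} (s : Finset ι) (x : Fin m → ℝ) (f : ι → Fin m → ℝ) :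
    x ⬝ᵥ (∑ i ∈ s, f i) = ∑ i ∈ s, x ⬝ᵥ f i := by
  simp only [dotProduct, Finset.sum_apply, Finset.mul_sum]
  exact Finset.sum_comm

lemma sq_expand (x y : Fin m → ℝ) :
    (x - y) ⬝ᵥ (x - y) = x ⬝ᵥ x - 2 * (x ⬝ᵥ y) + y ⬝ᵥ y := by
  simp only [sub_dotProduct, dotProduct_sub, dotProduct_comm y x]; ring

lemma bilin_expand (x y z w : Fin m → ℝ) :
    (x - y) ⬝ᵥ (z - w) = x ⬝ᵥ z - x ⬝ᵥ w - y ⬝ᵥ z + y ⬝ᵥ w := by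
  simp only [sub_dotProduct, dotProduct_sub]; ring

lemma sq2 (q c : Fin m → ℝ) (s : ℝ) :
    (q + s • c) ⬝ᵥ (q + s • c) = q ⬝ᵥ q + 2*s*(q ⬝ᵥ c) + s^2*(c ⬝ᵥ c) := by
  simp only [dotProduct_add, add_dotProduct, dotProduct_smul, smul_dotProduct,
    smul_eq_mul, dotProduct_comm c q]; ring

/-- Strong form of the minimization property of a convex function plus a
quadratic penalty over a convex set. -/
lemma strong_min {N : ℕ} (hβ : 0 < β) (θi : (Fin N → ℝ) → ℝ)
    (hθ : ConvexOn ℝ Set.univ θi) {Xi : Set (Fin N → ℝ)} (hX : Convex ℝ Xi)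
    (A : Matrix (Fin m) (Fin N) ℝ) (l u : Fin m → ℝ) {x y : Fin N → ℝ}
    (hx : x ∈ Xi) (hy : y ∈ Xi)
    (hmin : ∀ z ∈ Xi,
      θi x - l ⬝ᵥ A.mulVec x + β/2 * ((A.mulVec x - u) ⬝ᵥ (A.mulVec x - u)) ≤
      θi z - l ⬝ᵥ A.mulVec z + β/2 * ((A.mulVec z - u) ⬝ᵥ (A.mulVec z - u))) :
    θi x - l ⬝ᵥ A.mulVec x + β/2 * ((A.mulVec x - u) ⬝ᵥ (A.mulVec x - u))
      + β/2 * ((A.mulVec y - A.mulVec x) ⬝ᵥ (A.mulVec y - A.mulVec x)) ≤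
    θi y - l ⬝ᵥ A.mulVec y + β/2 * ((A.mulVec y - u) ⬝ᵥ (A.mulVec y - u)) := by
  set ax := A.mulVec x with hax
  set ay := A.mulVec y with hay
  set c := ay - ax with hc
  set q := ax - u with hq
  have gy_q : ay - u = q + (1:ℝ) • c := by rw [one_smul, hq, hc]; abel
  have hkey : ∀ t : ℝ, 0 < t → t ≤ 1 →
      θi x ≤ θi y - l ⬝ᵥ c + β * (q ⬝ᵥ c) + β/2 * t * (c ⬝ᵥ c) := by
    intro t ht0 ht1
    set z := (1-t) • x + t • y with hz
    have hzX : z ∈ Xi := hX hx hy (by linarith) ht0.le (by ring)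
    have hθz : θi z ≤ (1-t) * θi x + t * θi y := by
      have h := hθ.2 (Set.mem_univ x) (Set.mem_univ y)
        (by linarith : (0:ℝ) ≤ 1 - t) ht0.le (by ring)
      simpa [smul_eq_mul] using h
    have hAz : A.mulVec z = ax + t • c := by
      rw [hz]
      rw [Matrix.mulVec_add, Matrix.mulVec_smul, Matrix.mulVec_smul]
      rw [hc]
      funext j
      simp [Pi.add_apply, Pi.smul_apply, smul_eq_mul, Pi.sub_apply]
      ring
    have hmz := hmin z hzX
    rw [hAz] at hmz
    have hzu : ax + t • c - u = q + t • c := by rw [hq]; abel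
    rw [hzu] at hmz
    rw [sq2 q c t] at hmz
    have hlz : l ⬝ᵥ (ax + t • c) = l ⬝ᵥ ax + t * (l ⬝ᵥ c) := by
      simp [dotProduct_add, dotProduct_smul]
    rw [hlz] at hmz
    have step : t * θi x ≤ t * (θi y - l ⬝ᵥ c + β * (q ⬝ᵥ c) + β/2 * t * (c ⬝ᵥ c)) := by
      nlinarith [hmz, hθz]
    exact le_of_mul_le_mul_left step ht0
  have hlim : θi x ≤ θi y - l ⬝ᵥ c + β * (q ⬝ᵥ c) := by
    by_contra hcon
    push_neg at hcon
    set ε := (θi x - (θi y - l ⬝ᵥ c + β * (q ⬝ᵥ c))) / 2 with hε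
    have hε0 : 0 < ε := by simp [hε]; linarith
    have hcc : 0 ≤ c ⬝ᵥ c := dot_nonneg' c
    set D := β/2 * (c ⬝ᵥ c) with hD
    have hD0 : 0 ≤ D := by positivity
    set t := min 1 (ε / (D + 1)) with ht
    have ht0 : 0 < t := lt_min one_pos (by positivity)
    have ht1 : t ≤ 1 := min_le_left _ _
    have htD : t * D ≤ ε := by
      have h1 : t ≤ ε / (D + 1) := min_le_right _ _
      have h2 : t * D ≤ (ε / (D + 1)) * D := mul_le_mul_of_nonneg_right h1 hD0
      have h3 : (ε / (D + 1)) * D ≤ ε := by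
        rw [div_mul_eq_mul_div, div_le_iff₀ (by linarith)]
        nlinarith
      linarith
    have hk := hkey t ht0 ht1
    have hk2 : θi x ≤ θi y - l ⬝ᵥ c + β * (q ⬝ᵥ c) + ε := by
      have hβt : β/2 * t * (c ⬝ᵥ c) = t * D := by rw [hD]; ring
      linarith [hβt ▸ hk, htD]
    linarith
  rw [gy_q, sq2 q c 1]
  have hlc : l ⬝ᵥ ay = l ⬝ᵥ ax + l ⬝ᵥ c := by
    rw [hc]; simp [dotProduct_sub]
  rw [hlc]
  linarith [hlim]

lemma kron_mulVec (X : Matrix (Fin p ⊕ Unit) (Fin p ⊕ Unit) ℝ)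
    (v : (Fin p ⊕ Unit) × Fin m → ℝ) (i : Fin p ⊕ Unit) (j : Fin m) :
    ((X ⊗ₖ (1 : Matrix (Fin m) (Fin m) ℝ)).mulVec v) (i, j) = ∑ k, X i k * v (k, j) := by
  simp [Matrix.mulVec, dotProduct, Fintype.sum_prod_type, Matrix.one_apply,
    mul_ite, ite_mul, mul_zero, zero_mul, mul_one, Finset.sum_ite_eq, Finset.sum_ite_eq']

lemma qform_expand (v w : (Fin p ⊕ Unit) × Fin m → ℝ) :
    v ⬝ᵥ (calQ p m β).mulVec w =
      (∑ i, (β * (uOf v i ⬝ᵥ uOf w i) + uOf v i ⬝ᵥ lamOf w - lamOf v ⬝ᵥ uOf w i))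
        + (1/β) * (lamOf v ⬝ᵥ lamOf w) := by
  have h1 : ∀ (i : Fin p ⊕ Unit) (j : Fin m),
      ((calQ p m β).mulVec w) (i, j) = ∑ k, Q0 p β i k * w (k, j) := fun i j =>
    kron_mulVec (Q0 p β) w i j
  calc v ⬝ᵥ (calQ p m β).mulVec w
      = ∑ q : (Fin p ⊕ Unit) × Fin m, v q * ∑ k, Q0 p β q.1 k * w (k, q.2) := by
        simp only [dotProduct]
        exact Finset.sum_congr rfl fun q _ => by rw [← h1 q.1 q.2]
    _ = ∑ i : Fin p ⊕ Unit, ∑ j : Fin m, v (i,j) * ∑ k, Q0 p β i k * w (k, j) := by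
        rw [Fintype.sum_prod_type]
    _ = (∑ a : Fin p, ∑ j : Fin m, v (Sum.inl a, j) * (β * w (Sum.inl a, j) + w (Sum.inr (), j)))
        + ∑ j : Fin m, v (Sum.inr (), j) *
            ((- ∑ l : Fin p, w (Sum.inl l, j)) + (1/β) * w (Sum.inr (), j)) := by
        rw [Fintype.sum_sum_type]
        congr 1
        · refine Finset.sum_congr rfl fun a _ => Finset.sum_congr rfl fun j _ => ?_
          congr 1
          rw [Fintype.sum_sum_type]
          simp [Q0_ll, Q0_lr, ite_mul, Finset.sum_ite_eq, Finset.sum_ite_eq']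
        · simp only [Finset.univ_unique, Finset.sum_singleton]
          refine Finset.sum_congr rfl fun j _ => ?_
          congr 1
          rw [Fintype.sum_sum_type]
          simp [Q0_rl, Q0_rr, Finset.sum_neg_distrib, neg_mul]
    _ = (∑ a, (β * (uOf v a ⬝ᵥ uOf w a) + uOf v a ⬝ᵥ lamOf w))
        + ((- ∑ l, (lamOf v ⬝ᵥ uOf w l)) + (1/β) * (lamOf v ⬝ᵥ lamOf w)) := by
        congr 1
        · refine Finset.sum_congr rfl fun a _ => ?_
          simp only [uOf, lamOf, dotProduct, Finset.mul_sum]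
          rw [← Finset.sum_add_distrib]
          exact Finset.sum_congr rfl fun j _ => by ring
        · have hswap : ∑ j : Fin m, ∑ l : Fin p, v (Sum.inr (), j) * w (Sum.inl l, j)
              = ∑ l : Fin p, (lamOf v ⬝ᵥ uOf w l) := by
            rw [Finset.sum_comm]
            exact Finset.sum_congr rfl fun l _ => rfl
          calc ∑ j : Fin m, v (Sum.inr (), j) *
                ((- ∑ l : Fin p, w (Sum.inl l, j)) + (1/β) * w (Sum.inr (), j))
              = (- ∑ j : Fin m, ∑ l : Fin p, v (Sum.inr (), j) * w (Sum.inl l, j))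
                + (1/β) * ∑ j : Fin m, v (Sum.inr (), j) * w (Sum.inr (), j) := by
                rw [← Finset.sum_neg_distrib, Finset.mul_sum, ← Finset.sum_add_distrib]
                refine Finset.sum_congr rfl fun j _ => ?_
                simp only [mul_add, mul_neg, Finset.mul_sum]
                ring
            _ = (- ∑ l, (lamOf v ⬝ᵥ uOf w l)) + (1/β) * (lamOf v ⬝ᵥ lamOf w) := by
                rw [hswap]; rfl
    _ = (∑ i, (β * (uOf v i ⬝ᵥ uOf w i) + uOf v i ⬝ᵥ lamOf w - lamOf v ⬝ᵥ uOf w i))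
        + (1/β) * (lamOf v ⬝ᵥ lamOf w) := by
        rw [Finset.sum_sub_distrib]
        ring

lemma dform_expand (v w : (Fin p ⊕ Unit) × Fin m → ℝ) :
    v ⬝ᵥ (calD p m β).mulVec w =
      (∑ i, β * (uOf v i ⬝ᵥ uOf w i)) + (1/β) * (lamOf v ⬝ᵥ lamOf w) := by
  have h1 : ∀ (i : Fin p ⊕ Unit) (j : Fin m),
      ((calD p m β).mulVec w) (i, j) = ∑ k, D0 p β i k * w (k, j) := fun i j =>
    kron_mulVec (D0 p β) w i j
  calc v ⬝ᵥ (calD p m β).mulVec w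
      = ∑ q : (Fin p ⊕ Unit) × Fin m, v q * ∑ k, D0 p β q.1 k * w (k, q.2) := by
        simp only [dotProduct]
        exact Finset.sum_congr rfl fun q _ => by rw [← h1 q.1 q.2]
    _ = ∑ i : Fin p ⊕ Unit, ∑ j : Fin m, v (i,j) * ∑ k, D0 p β i k * w (k, j) := by
        rw [Fintype.sum_prod_type]
    _ = (∑ a : Fin p, ∑ j : Fin m, v (Sum.inl a, j) * (β * w (Sum.inl a, j)))
        + ∑ j : Fin m, v (Sum.inr (), j) * ((1/β) * w (Sum.inr (), j)) := by
        rw [Fintype.sum_sum_type]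
        congr 1
        · refine Finset.sum_congr rfl fun a _ => Finset.sum_congr rfl fun j _ => ?_
          congr 1
          rw [Fintype.sum_sum_type]
          simp [D0_ll, D0_lr, ite_mul, Finset.sum_ite_eq, Finset.sum_ite_eq']
        · simp only [Finset.univ_unique, Finset.sum_singleton]
          refine Finset.sum_congr rfl fun j _ => ?_
          congr 1
          rw [Fintype.sum_sum_type]
          simp [D0_rl, D0_rr]
    _ = (∑ i, β * (uOf v i ⬝ᵥ uOf w i)) + (1/β) * (lamOf v ⬝ᵥ lamOf w) := by
        congr 1
        · refine Finset.sum_congr rfl fun a _ => ?_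
          simp only [uOf, dotProduct, Finset.mul_sum]
          exact Finset.sum_congr rfl fun j _ => by ring
        · simp only [lamOf, dotProduct, Finset.mul_sum]
          exact Finset.sum_congr rfl fun j _ => by ring

lemma calH_mul_calM (hβ : β ≠ 0) : calH p m β * calM p m β = calQ p m β := by
  unfold calH calM calQ
  rw [← Matrix.mul_kronecker_mul, HM_eq_Q hβ, Matrix.one_mul]

lemma calMT_mul_calQ (hβ : β ≠ 0) : (calM p m β)ᵀ * calQ p m β = calD p m β := by
  unfold calM calQ calD
  rw [← Matrix.kroneckerMap_transpose, Matrix.transpose_one,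
    ← Matrix.mul_kronecker_mul, MtQ_eq_D hβ, Matrix.one_mul]

lemma calH_symm : (calH p m β)ᵀ = calH p m β := by
  unfold calH
  rw [← Matrix.kroneckerMap_transpose, Matrix.transpose_one, Ht_eq_H]

lemma calQ_add_T : calQ p m β + (calQ p m β)ᵀ = (2:ℝ) • calD p m β := by
  unfold calQ calD
  rw [← Matrix.kroneckerMap_transpose, Matrix.transpose_one, ← Matrix.add_kronecker,
    Q_add_Qt, Matrix.smul_kronecker]

lemma dot_mulVec_left (A : Matrix ((Fin p ⊕ Unit) × Fin m) ((Fin p ⊕ Unit) × Fin m) ℝ)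
    (x y : (Fin p ⊕ Unit) × Fin m → ℝ) :
    (A.mulVec x) ⬝ᵥ y = x ⬝ᵥ (Aᵀ.mulVec y) := by
  rw [Matrix.dotProduct_mulVec, Matrix.vecMul_transpose]

lemma nsqH_M (hβ : β ≠ 0) (v : (Fin p ⊕ Unit) × Fin m → ℝ) :
    nsq (calH p m β) ((calM p m β).mulVec v) = nsq (calD p m β) v := by
  unfold nsq
  rw [Matrix.mulVec_mulVec, calH_mul_calM hβ, dot_mulVec_left, Matrix.mulVec_mulVec,
    calMT_mul_calQ hβ]

lemma qform_symm_eq_d (v : (Fin p ⊕ Unit) × Fin m → ℝ) :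
    v ⬝ᵥ (calQ p m β).mulVec v = nsq (calD p m β) v := by
  have h1 : v ⬝ᵥ ((calQ p m β)ᵀ.mulVec v) = v ⬝ᵥ (calQ p m β).mulVec v := by
    rw [← dot_mulVec_left, dotProduct_comm]
  have h2 : v ⬝ᵥ ((calQ p m β + (calQ p m β)ᵀ).mulVec v)
      = 2 * (v ⬝ᵥ (calQ p m β).mulVec v) := by
    rw [Matrix.add_mulVec, dotProduct_add, h1]; ring
  have h3 : v ⬝ᵥ (((2:ℝ) • calD p m β).mulVec v) = 2 * nsq (calD p m β) v := by
    rw [Matrix.smul_mulVec, dotProduct_smul]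
    simp [nsq, smul_eq_mul]
  rw [calQ_add_T] at h2
  rw [h3] at h2
  linarith

lemma nsqD_nonneg (hβ : 0 < β) (v : (Fin p ⊕ Unit) × Fin m → ℝ) :
    0 ≤ nsq (calD p m β) v := by
  rw [nsq, dform_expand]
  have h1 : 0 ≤ ∑ i, β * (uOf v i ⬝ᵥ uOf v i) :=
    Finset.sum_nonneg fun i _ => mul_nonneg hβ.le (dot_nonneg' _)
  have h2 : 0 ≤ (1/β) * (lamOf v ⬝ᵥ lamOf v) :=
    mul_nonneg (by positivity) (dot_nonneg' _)
  linarith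

lemma nsqH_diff (x y : (Fin p ⊕ Unit) × Fin m → ℝ) :
    nsq (calH p m β) x - nsq (calH p m β) y
      = 2 * (x ⬝ᵥ (calH p m β).mulVec (x - y)) - nsq (calH p m β) (x - y) := by
  have hsym : y ⬝ᵥ (calH p m β).mulVec x = x ⬝ᵥ (calH p m β).mulVec y := by
    rw [dotProduct_comm, dot_mulVec_left, calH_symm]
  unfold nsq
  rw [Matrix.mulVec_sub]
  simp only [dotProduct_sub, sub_dotProduct]
  linarith [hsym]

lemma nsq_smul (G : Matrix ((Fin p ⊕ Unit) × Fin m) ((Fin p ⊕ Unit) × Fin m) ℝ)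
    (t : ℝ) (v : (Fin p ⊕ Unit) × Fin m → ℝ) :
    nsq G (t • v) = t^2 * nsq G v := by
  unfold nsq
  rw [Matrix.mulVec_smul, smul_dotProduct, dotProduct_smul]
  simp [smul_eq_mul]; ring

end Helpers

/-- Monotonicity of `‖ξ^k − ξ^{k+1}‖²_ℋ`: for iterates of the parallel splitting ALM step
followed by the relaxation step `ξ^{k+1} = ξ^k − αℳ(ξ^k − ξ̃^k)` with `α ∈ (0,2)`, one has
`‖ξ^{k+1} − ξ^{k+2}‖²_ℋ ≤ ‖ξ^k − ξ^{k+1}‖²_ℋ`, and moreover the decrease is at least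
`α(2−α)‖(ξ^k − ξ̃^k) − (ξ^{k+1} − ξ̃^{k+1})‖²_𝒟`. -/
theorem stmt16 {p m : ℕ} {n : Fin p → ℕ} (hp : 1 ≤ p)
    (θ : (i : Fin p) → (Fin (n i) → ℝ) → ℝ) (hθ : ∀ i, ConvexOn ℝ Set.univ (θ i))
    (X : (i : Fin p) → Set (Fin (n i) → ℝ))
    (hXconv : ∀ i, Convex ℝ (X i)) (hXclosed : ∀ i, IsClosed (X i))
    (hXne : ∀ i, (X i).Nonempty)
    (A : (i : Fin p) → Matrix (Fin m) (Fin (n i)) ℝ) (b : Fin m → ℝ)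
    {β : ℝ} (hβ : 0 < β) {α : ℝ} (hα : α ∈ Set.Ioo (0 : ℝ) 2)
    (ξ : ℕ → ((Fin p ⊕ Unit) × Fin m → ℝ))
    (wt : ℕ → ((i : Fin p) → Fin (n i) → ℝ) × (Fin m → ℝ))
    (hstep : ∀ k, ALMStep β θ X A b (ξ k) (wt k))
    (hrel : ∀ k, ξ (k + 1) = ξ k - α • (calM p m β).mulVec (ξ k - Pmap A (wt k))) :
    ∀ k : ℕ,
      nsq (calH p m β) (ξ (k + 1) - ξ (k + 2)) ≤ nsq (calH p m β) (ξ k - ξ (k + 1)) ∧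
      nsq (calH p m β) (ξ k - ξ (k + 1)) - nsq (calH p m β) (ξ (k + 1) - ξ (k + 2)) ≥
        α * (2 - α) *
          nsq (calD p m β)
            ((ξ k - Pmap A (wt k)) - (ξ (k + 1) - Pmap A (wt (k + 1)))) := by
  obtain ⟨hα0, hα2⟩ := hα
  have hβ' : β ≠ 0 := ne_of_gt hβ
  intro k
  set a := ξ k - Pmap A (wt k) with ha
  set b := ξ (k + 1) - Pmap A (wt (k + 1)) with hb
  -- the "difference" quantities
  set da : Fin p → Fin m → ℝ :=
    fun i => (A i).mulVec ((wt k).1 i) - (A i).mulVec ((wt (k+1)).1 i) with hda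
  set du : Fin p → Fin m → ℝ := fun i => uOf (ξ k) i - uOf (ξ (k+1)) i with hdu
  set dl : Fin m → ℝ := lamOf (ξ k) - lamOf (ξ (k+1)) with hdl
  set U : Fin m → ℝ := ∑ i, du i with hU
  -- K i ≥ 0 for each i
  have hK : ∀ i : Fin p,
      0 ≤ β * (da i ⬝ᵥ du i) + dl ⬝ᵥ da i - β * (da i ⬝ᵥ da i) := by
    intro i
    have m1 := strong_min hβ (θ i) (hθ i) (hXconv i) (A i)
      (lamOf (ξ k)) (uOf (ξ k) i) (((hstep k).1 i).1) (((hstep (k+1)).1 i).1)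
      (fun z hz => ((hstep k).1 i).2 z hz)
    have m2 := strong_min hβ (θ i) (hθ i) (hXconv i) (A i)
      (lamOf (ξ (k+1))) (uOf (ξ (k+1)) i) (((hstep (k+1)).1 i).1) (((hstep k).1 i).1)
      (fun z hz => ((hstep (k+1)).1 i).2 z hz)
    set ak := (A i).mulVec ((wt k).1 i) with hak
    set ak' := (A i).mulVec ((wt (k+1)).1 i) with hak'
    set uk := uOf (ξ k) i with huk
    set uk' := uOf (ξ (k+1)) i with huk'
    set lk := lamOf (ξ k) with hlk
    set lk' := lamOf (ξ (k+1)) with hlk'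
    have q1 := congrArg (fun r => β * r) (sq_expand ak uk)
    have q2 := congrArg (fun r => β * r) (sq_expand ak' uk)
    have q3 := congrArg (fun r => β * r) (sq_expand ak' uk')
    have q4 := congrArg (fun r => β * r) (sq_expand ak uk')
    have q5 := congrArg (fun r => β * r) (sq_expand ak' ak)
    have q6 := congrArg (fun r => β * r) (sq_expand ak ak')
    have b1 := congrArg (fun r => β * r) (bilin_expand ak ak' uk uk')
    have b2 := bilin_expand lk lk' ak ak'
    have hcm := congrArg (fun r => β * r) (dotProduct_comm ak' ak)
    have hda_i : da i = ak - ak' := rfl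
    have hdu_i : du i = uk - uk' := rfl
    have hdl_i : dl = lk - lk' := rfl
    rw [hda_i, hdu_i, hdl_i]
    linarith [m1, m2, q1, q2, q3, q4, q5, q6, b1, b2, hcm]
  -- the key inequality
  have hcomp : (Pmap A (wt k) - Pmap A (wt (k+1))) ⬝ᵥ (calQ p m β).mulVec (a - b)
      = ∑ i, (β * (da i ⬝ᵥ du i) + dl ⬝ᵥ da i - β * (da i ⬝ᵥ da i)) := by
    rw [qform_expand]
    have hu_s : ∀ i, uOf (Pmap A (wt k) - Pmap A (wt (k+1))) i = da i := fun i => rfl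
    have hlam_s : lamOf (Pmap A (wt k) - Pmap A (wt (k+1))) = dl - β • U := by
      have e1 : lamOf (Pmap A (wt k) - Pmap A (wt (k+1))) = (wt k).2 - (wt (k+1)).2 := rfl
      rw [e1, (hstep k).2, (hstep (k+1)).2]
      funext j
      simp only [hdl, hU, hdu, Pi.sub_apply, Pi.smul_apply, smul_eq_mul,
        Finset.sum_apply]
      rw [Finset.sum_sub_distrib]
      ring
    have hu_ab : ∀ i, uOf (a - b) i = du i - da i := by
      intro i; funext j
      simp only [ha, hb, hdu, hda, uOf, Pi.sub_apply, Pmap]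
      show ξ k (Sum.inl i, j) - (A i).mulVec ((wt k).1 i) j
          - (ξ (k+1) (Sum.inl i, j) - (A i).mulVec ((wt (k+1)).1 i) j) = _
      try simp only [uOf, Pi.sub_apply]
      ring
    have hlam_ab : lamOf (a - b) = β • U := by
      have e1 : lamOf (a - b) = lamOf (ξ k) - (wt k).2 - (lamOf (ξ (k+1)) - (wt (k+1)).2) := rfl
      rw [e1, (hstep k).2, (hstep (k+1)).2]
      funext j
      simp only [hU, hdu, Pi.sub_apply, Pi.smul_apply, smul_eq_mul, Finset.sum_apply]
      rw [Finset.sum_sub_distrib]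
      simp only [uOf, Pi.sub_apply]
      ring
    simp only [hu_s, hlam_s, hu_ab, hlam_ab]
    have per : ∀ i, β * (da i ⬝ᵥ (du i - da i)) + da i ⬝ᵥ (β • U)
        - (dl - β • U) ⬝ᵥ (du i - da i)
        = (β * (da i ⬝ᵥ du i) + dl ⬝ᵥ da i - β * (da i ⬝ᵥ da i))
          - dl ⬝ᵥ du i + β * (U ⬝ᵥ du i) := by
      intro i
      have e1 : da i ⬝ᵥ (du i - da i) = da i ⬝ᵥ du i - da i ⬝ᵥ da i := dotProduct_sub _ _ _
      have e2 : da i ⬝ᵥ (β • U) = β * (da i ⬝ᵥ U) := by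
        rw [dotProduct_smul]; simp [smul_eq_mul]
      have e3 : (dl - β • U) ⬝ᵥ (du i - da i)
          = dl ⬝ᵥ du i - dl ⬝ᵥ da i - β * (U ⬝ᵥ du i) + β * (U ⬝ᵥ da i) := by
        simp only [sub_dotProduct, dotProduct_sub, smul_dotProduct, smul_eq_mul]
        ring
      have e4 : U ⬝ᵥ da i = da i ⬝ᵥ U := dotProduct_comm _ _
      rw [e1, e2, e3, e4]
      ring
    rw [Finset.sum_congr rfl (fun i _ => per i)]
    have hsum1 : ∑ i, dl ⬝ᵥ du i = dl ⬝ᵥ U := by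
      rw [hU, dotProduct_sum']
    have hsum2 : ∑ i, U ⬝ᵥ du i = U ⬝ᵥ U := by
      conv_rhs => rw [hU]
      rw [dotProduct_sum']
    have hlast : (1/β) * ((dl - β • U) ⬝ᵥ (β • U)) = dl ⬝ᵥ U - β * (U ⬝ᵥ U) := by
      simp only [sub_dotProduct, dotProduct_smul, smul_dotProduct, smul_eq_mul]
      field_simp
      try ring
    rw [hlast]
    rw [Finset.sum_add_distrib, Finset.sum_sub_distrib, hsum1]
    rw [← Finset.mul_sum, hsum2]
    ring
  have hkey : 0 ≤ (Pmap A (wt k) - Pmap A (wt (k+1))) ⬝ᵥ (calQ p m β).mulVec (a - b) := by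
    rw [hcomp]
    exact Finset.sum_nonneg fun i _ => hK i
  -- s = α • ℳ a − (a − b)
  have hMa : α • (calM p m β).mulVec a = ξ k - ξ (k + 1) := by
    rw [hrel k]; abel
  have hMb : α • (calM p m β).mulVec b = ξ (k + 1) - ξ (k + 2) := by
    have := hrel (k + 1)
    rw [this]; abel
  have hs : Pmap A (wt k) - Pmap A (wt (k+1))
      = α • (calM p m β).mulVec a - (a - b) := by
    rw [hMa, ha, hb]; abel
  -- main quantities
  set Ma := (calM p m β).mulVec a with hMa'
  set Mb := (calM p m β).mulVec b with hMb'
  set S := nsq (calD p m β) (a - b) with hS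
  set T := Ma ⬝ᵥ (calH p m β).mulVec (Ma - Mb) with hT
  have hS0 : 0 ≤ S := nsqD_nonneg hβ _
  have hTQ : T = Ma ⬝ᵥ (calQ p m β).mulVec (a - b) := by
    rw [hT]
    have hMab : Ma - Mb = (calM p m β).mulVec (a - b) := by
      rw [hMa', hMb']; exact (Matrix.mulVec_sub _ _ _).symm
    rw [hMab, Matrix.mulVec_mulVec, calH_mul_calM hβ']
  have hαT : S ≤ α * T := by
    have h1 := hkey
    rw [hs] at h1
    rw [sub_dotProduct, smul_dotProduct] at h1
    rw [qform_symm_eq_d (a - b)] at h1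
    rw [hTQ]
    simp only [smul_eq_mul] at h1
    linarith
  have hMM : nsq (calH p m β) (Ma - Mb) = S := by
    have hMab : Ma - Mb = (calM p m β).mulVec (a - b) := by
      rw [hMa', hMb']; exact (Matrix.mulVec_sub _ _ _).symm
    rw [hMab, nsqH_M hβ', hS]
  have hdiff : nsq (calH p m β) Ma - nsq (calH p m β) Mb = 2 * T - S := by
    rw [nsqH_diff Ma Mb, hMM, hT]
  have hNa : nsq (calH p m β) (ξ k - ξ (k + 1)) = α^2 * nsq (calH p m β) Ma := by
    rw [← hMa, nsq_smul]
  have hNb : nsq (calH p m β) (ξ (k + 1) - ξ (k + 2)) = α^2 * nsq (calH p m β) Mb := by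
    rw [← hMb, nsq_smul]
  have hprod1 : 0 ≤ α * (α * T - S) := mul_nonneg hα0.le (by linarith)
  have hprod2 : 0 ≤ (α * (2 - α)) * S := mul_nonneg (mul_nonneg hα0.le (by linarith)) hS0
  have hdiff2 := congrArg (fun r => α^2 * r) hdiff
  simp only [mul_sub] at hdiff2
  constructor
  · rw [hNa, hNb]
    nlinarith [hprod1, hprod2, hdiff2]
  · rw [hNa, hNb]
    nlinarith [hprod1, hprod2, hdiff2]
end
end
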